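/- Let n ≥ 2, t ≥ 2, and let Bad be a collection of 'bad' trapezoids, each defined by at most 4 curves out of n curves, with at most 20t trapezoids defined by any fixed set of at most 4 curves, and each bad trapezoid Δ satisfying |I(Δ)| ≥ n/2. If each curve is sampled independently with probability p = r/n, and X counts the bad trapezoids Δ such that all curves of D(Δ) are sampled and no curve of I(Δ) is sampled (where |D(Δ)| ≤ 4), then E[X] ≤ 80·t·r⁴·e^{−r/2}. -/

import Mathlib

/-- Expected number of bad trapezoids appearing in the vertical decomposition of a
random sample.  `Bad` is an abstract finite index set of bad trapezoids; `D Δ` is the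
set of (at most 4, at least 1) defining curves of `Δ`, at most `20t` trapezoids share any
given defining set, and `I Δ ≥ n/2` counts the curves crossing the interior of `Δ`.
Each curve is sampled with probability `p = r/n`, so `Δ` appears with probability
`p^{|D Δ|} (1-p)^{I Δ}`.  Then `E[X] ≤ 80 t r⁴ e^{-r/2}`. -/
theorem stmt_4 (n t : ℕ) (hn : 2 ≤ n) (ht : 2 ≤ t) (r : ℝ) (hr : 1 ≤ r) (hrn : r ≤ n)
    (Bad : Type) [Fintype Bad]
    (D : Bad → Finset (Fin n)) (I : Bad → ℕ)
    (hD1 : ∀ Δ, 1 ≤ (D Δ).card) (hD4 : ∀ Δ, (D Δ).card ≤ 4)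
    (hfiber : ∀ s : Finset (Fin n),
      (Finset.univ.filter (fun Δ => D Δ = s)).card ≤ 20 * t)
    (hI : ∀ Δ, (n : ℝ) / 2 ≤ (I Δ : ℝ)) :
    ∑ Δ : Bad, (r / n) ^ (D Δ).card * (1 - r / n) ^ (I Δ)
      ≤ 80 * t * r ^ 4 * Real.exp (-r / 2) := by
  have hn0 : (0:ℝ) < n := by positivity
  have hp0 : 0 ≤ r / n := by positivity
  have hp1 : r / n ≤ 1 := (div_le_one hn0).2 hrn
  -- Step 1: (1 - r/n)^(I Δ) ≤ exp(-r/2)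
  have key : ∀ Δ : Bad, (1 - r / n) ^ (I Δ) ≤ Real.exp (-r / 2) := by
    intro Δ
    have h1 : (1 - r / n) ^ (I Δ) ≤ Real.exp (-(r / n)) ^ (I Δ) := by
      apply pow_le_pow_left₀ (by linarith)
      have := Real.add_one_le_exp (-(r / n))
      linarith
    have h2 : Real.exp (-(r / n)) ^ (I Δ) = Real.exp (-(r / n) * I Δ) := by
      rw [← Real.exp_nat_mul]; ring_nf
    have h3 : -(r / n) * I Δ ≤ -r / 2 := by
      have hIΔ := hI Δ
      have : r / n * (n / 2) ≤ r / n * I Δ := by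
        apply mul_le_mul_of_nonneg_left hIΔ hp0
      have heq : r / n * (n / 2) = r / 2 := by field_simp
      nlinarith
    calc (1 - r / n) ^ (I Δ) ≤ Real.exp (-(r / n) * I Δ) := by rw [← h2]; exact h1
      _ ≤ Real.exp (-r / 2) := Real.exp_le_exp.2 h3
  have step1 : ∑ Δ : Bad, (r / n) ^ (D Δ).card * (1 - r / n) ^ (I Δ)
      ≤ (∑ Δ : Bad, (r / n) ^ (D Δ).card) * Real.exp (-r / 2) := by
    rw [Finset.sum_mul]
    apply Finset.sum_le_sum
    intro Δ _
    exact mul_le_mul_of_nonneg_left (key Δ) (by positivity)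
  -- Step 2: ∑ Δ, (r/n)^(card D Δ) ≤ 80 * t * r^4
  have step2 : (∑ Δ : Bad, (r / n) ^ (D Δ).card) ≤ 80 * t * r ^ 4 := by
    have hsum : (∑ Δ : Bad, (r / n) ^ (D Δ).card)
        = ∑ s ∈ Finset.univ.image D,
            ((Finset.univ.filter (fun Δ => D Δ = s)).card : ℝ) * (r / n) ^ s.card := by
      rw [Finset.sum_comp (fun s : Finset (Fin n) => (r / n) ^ s.card) D]
      simp [nsmul_eq_mul]
    rw [hsum]
    have hbound1 : ∑ s ∈ Finset.univ.image D,
          ((Finset.univ.filter (fun Δ => D Δ = s)).card : ℝ) * (r / n) ^ s.card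
        ≤ ∑ s ∈ Finset.univ.image D, (20 * t : ℝ) * (r / n) ^ s.card := by
      apply Finset.sum_le_sum
      intro s _
      apply mul_le_mul_of_nonneg_right _ (by positivity)
      exact_mod_cast hfiber s
    have hsubset : Finset.univ.image D ⊆
        (Finset.Icc 1 4).biUnion (fun i => (Finset.univ : Finset (Fin n)).powersetCard i) := by
      intro s hs
      simp only [Finset.mem_image] at hs
      obtain ⟨Δ, _, rfl⟩ := hs
      simp only [Finset.mem_biUnion, Finset.mem_Icc, Finset.mem_powersetCard_univ]
      exact ⟨(D Δ).card, ⟨hD1 Δ, hD4 Δ⟩, rfl⟩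
    have hbound2 : ∑ s ∈ Finset.univ.image D, (20 * t : ℝ) * (r / n) ^ s.card
        ≤ ∑ s ∈ (Finset.Icc 1 4).biUnion (fun i => (Finset.univ : Finset (Fin n)).powersetCard i),
            (20 * t : ℝ) * (r / n) ^ s.card := by
      apply Finset.sum_le_sum_of_subset_of_nonneg hsubset
      intro s _ _; positivity
    have hdisj : ((Finset.Icc 1 4 : Finset ℕ) : Set ℕ).PairwiseDisjoint
        (fun i => (Finset.univ : Finset (Fin n)).powersetCard i) := by
      intro i _ j _ hij
      apply Finset.disjoint_left.2
      intro s hsi hsj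
      rw [Finset.mem_powersetCard_univ] at hsi hsj
      exact hij (hsi ▸ hsj ▸ rfl)
    have hbiu : ∑ s ∈ (Finset.Icc 1 4).biUnion (fun i => (Finset.univ : Finset (Fin n)).powersetCard i),
            (20 * t : ℝ) * (r / n) ^ s.card
        = ∑ i ∈ Finset.Icc 1 4, ∑ s ∈ (Finset.univ : Finset (Fin n)).powersetCard i,
            (20 * t : ℝ) * (r / n) ^ s.card := Finset.sum_biUnion hdisj
    have hinner : ∀ i ∈ Finset.Icc 1 4,
        (∑ s ∈ (Finset.univ : Finset (Fin n)).powersetCard i,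
            (20 * t : ℝ) * (r / n) ^ s.card) ≤ 20 * t * r ^ 4 := by
      intro i hi
      simp only [Finset.mem_Icc] at hi
      have heach : ∀ s ∈ (Finset.univ : Finset (Fin n)).powersetCard i,
          (20 * t : ℝ) * (r / n) ^ s.card = (20 * t : ℝ) * (r / n) ^ i := by
        intro s hs
        rw [Finset.mem_powersetCard_univ] at hs
        rw [hs]
      rw [Finset.sum_congr rfl heach, Finset.sum_const, Finset.card_powersetCard,
        nsmul_eq_mul]
      simp only [Finset.card_univ, Fintype.card_fin]
      have hch : ((n.choose i : ℝ)) ≤ (n : ℝ) ^ i := by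
        exact_mod_cast Nat.choose_le_pow n i
      have h1 : ((n.choose i : ℝ)) * ((20 * t : ℝ) * (r / n) ^ i)
          ≤ (n:ℝ)^i * ((20 * t : ℝ) * (r / n) ^ i) := by
        apply mul_le_mul_of_nonneg_right hch (by positivity)
      have h2 : (n:ℝ)^i * ((20 * t : ℝ) * (r / n) ^ i) = 20 * t * r ^ i := by
        rw [div_pow]; field_simp
      have h3 : r ^ i ≤ r ^ 4 := pow_le_pow_right₀ hr hi.2
      have ht0 : (0:ℝ) ≤ 20 * t := by positivity
      nlinarith
    have hfinal : ∑ i ∈ Finset.Icc 1 4, ∑ s ∈ (Finset.univ : Finset (Fin n)).powersetCard i,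
            (20 * t : ℝ) * (r / n) ^ s.card
        ≤ ∑ i ∈ Finset.Icc 1 4, (20 * t * r ^ 4 : ℝ) := Finset.sum_le_sum hinner
    have hcard : ∑ i ∈ Finset.Icc 1 4, (20 * t * r ^ 4 : ℝ) = 80 * t * r ^ 4 := by
      rw [Finset.sum_const]
      norm_num [Nat.card_Icc]
      ring
    linarith [hbound1, hbound2, hbiu ▸ hfinal, hcard ▸ le_refl (80 * (t:ℝ) * r ^ 4)]
  calc ∑ Δ : Bad, (r / n) ^ (D Δ).card * (1 - r / n) ^ (I Δ)
      ≤ (∑ Δ : Bad, (r / n) ^ (D Δ).card) * Real.exp (-r / 2) := step1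
    _ ≤ 80 * t * r ^ 4 * Real.exp (-r / 2) :=
        mul_le_mul_of_nonneg_right step2 (Real.exp_pos _).le
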